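/- arXiv:1909.07752 — 3 statements merged into one kernel-verified Lean document; each statement's English description precedes it below -/
import Mathlib

section
/- Let 𝒳 = {x_{n,k}} with weights τ = {τ_{n,k}} be a Marcinkiewicz–Zygmund family on 𝕋 with constants A, B > 0, let f be a continuous function on 𝕋, and let p_n ∈ 𝒯_n be a minimizer of p ↦ ∑_{k=1}^{L_n} |f(x_{n,k}) − p(x_{n,k})|² τ_{n,k} over 𝒯_n. Then ‖P_n f − p_n‖₂² ≤ A^{-2} B ∑_{k=1}^{L_n} |f(x_{n,k}) − P_n f(x_{n,k})|² τ_{n,k}. -/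
open MeasureTheory AddCircle

noncomputable section

/-- The torus `𝕋 = ℝ/ℤ`. -/
abbrev Torus := UnitAddCircle

/-- Normalized Haar (Lebesgue) probability measure on the torus. -/
abbrev haar : Measure Torus := AddCircle.haarAddCircle

/-- `‖p‖₂² = ∫_𝕋 |p(x)|² dx`. -/
def L2normSq (p : Torus → ℂ) : ℝ := ∫ x, ‖p x‖ ^ 2 ∂haar

/-- `p` is a trigonometric polynomial of degree `n`. -/
def IsTrigPoly (n : ℕ) (p : Torus → ℂ) : Prop :=
  ∃ c : ℤ → ℂ, p = fun x => ∑ l ∈ Finset.Icc (-(n : ℤ)) (n : ℤ), c l * fourier l x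

/-- `P_n f`, the orthogonal projection of `f` onto `𝒯_n` (partial Fourier sum). -/
def proj (n : ℕ) (f : Torus → ℂ) : Torus → ℂ :=
  fun x => ∑ l ∈ Finset.Icc (-(n : ℤ)) (n : ℤ), fourierCoeff f l * fourier l x

lemma trig_proj (n : ℕ) (f : Torus → ℂ) : IsTrigPoly n (proj n f) :=
  ⟨fun l => fourierCoeff f l, rfl⟩

lemma trig_sub {n : ℕ} {p q : Torus → ℂ} (hp : IsTrigPoly n p) (hq : IsTrigPoly n q) :
    IsTrigPoly n (fun t => p t - q t) := by
  obtain ⟨c, rfl⟩ := hp; obtain ⟨d, rfl⟩ := hq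
  exact ⟨fun l => c l - d l, by funext t; rw [← Finset.sum_sub_distrib]; congr 1; funext l; ring⟩

lemma trig_add_smul {n : ℕ} {p q : Torus → ℂ} (z : ℂ) (hp : IsTrigPoly n p) (hq : IsTrigPoly n q) :
    IsTrigPoly n (fun t => p t + z * q t) := by
  obtain ⟨c, rfl⟩ := hp; obtain ⟨d, rfl⟩ := hq
  refine ⟨fun l => c l + z * d l, ?_⟩
  funext t
  rw [Finset.mul_sum, ← Finset.sum_add_distrib]
  congr 1; funext l; ring

lemma trig_one (n : ℕ) : IsTrigPoly n (fun _ => (1 : ℂ)) := by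
  refine ⟨fun l => if l = 0 then 1 else 0, ?_⟩
  funext t
  rw [Finset.sum_eq_single 0]
  · simp
  · intro l _ hl; simp [hl]
  · intro h; exact absurd (by simp : (0:ℤ) ∈ Finset.Icc (-(n : ℤ)) (n : ℤ)) h

lemma L2_one : L2normSq (fun _ => (1 : ℂ)) = 1 := by
  simp [L2normSq]

lemma norm_sq_complex (w : ℂ) : ‖w‖ ^ 2 = Complex.normSq w := by
  rw [Complex.sq_norm]

/-- if `p_n ∈ 𝒯_n` minimizes the weighted least squares functional
`p ↦ ∑_k |f(x_{n,k}) − p(x_{n,k})|² τ_{n,k}` over `𝒯_n`, then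
`‖P_n f − p_n‖₂² ≤ A⁻² B ∑_k |f(x_{n,k}) − P_n f(x_{n,k})|² τ_{n,k}`. -/
theorem quasi_interpolant_vs_projection
    (L : ℕ → ℕ) (x : ∀ n, Fin (L n) → Torus) (τ : ∀ n, Fin (L n) → ℝ)
    (A B : ℝ) (hA : 0 < A) (hB : 0 < B) (hτ : ∀ n k, 0 < τ n k)
    (hMZ : ∀ n (p : Torus → ℂ), IsTrigPoly n p →
      A * L2normSq p ≤ ∑ k, ‖p (x n k)‖ ^ 2 * τ n k ∧
      ∑ k, ‖p (x n k)‖ ^ 2 * τ n k ≤ B * L2normSq p)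
    (f : Torus → ℂ) (hf : Continuous f)
    (n : ℕ) (pn : Torus → ℂ) (hpn : IsTrigPoly n pn)
    (hmin : ∀ q : Torus → ℂ, IsTrigPoly n q →
      ∑ k, ‖f (x n k) - pn (x n k)‖ ^ 2 * τ n k ≤
        ∑ k, ‖f (x n k) - q (x n k)‖ ^ 2 * τ n k) :
    L2normSq (fun t => proj n f t - pn t) ≤
      A⁻¹ ^ 2 * B * ∑ k, ‖f (x n k) - proj n f (x n k)‖ ^ 2 * τ n k := by
  set g : Torus → ℂ := fun t => proj n f t - pn t with hg_def
  have hgT : IsTrigPoly n g := trig_sub (trig_proj n f) hpn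
  have hMZg := (hMZ n g hgT).1
  set G : ℝ := ∑ k, ‖g (x n k)‖ ^ 2 * τ n k with hG_def
  set S : ℝ := ∑ k, ‖f (x n k) - proj n f (x n k)‖ ^ 2 * τ n k with hS_def
  have hG0 : 0 ≤ G := Finset.sum_nonneg fun k _ => mul_nonneg (by positivity) (hτ n k).le
  have hS0 : 0 ≤ S := Finset.sum_nonneg fun k _ => mul_nonneg (by positivity) (hτ n k).le
  have hAB : A ≤ B := by
    obtain ⟨h1, h2⟩ := hMZ n _ (trig_one n)
    simp only [L2_one, mul_one] at h1 h2
    exact h1.trans h2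
  -- the weighted discrete inner product of (f - pn) with g
  set Iag : ℂ := ∑ k, (f (x n k) - pn (x n k)) * (starRingEnd ℂ) (g (x n k)) * (τ n k : ℂ)
    with hIag_def
  -- key variational inequality
  have key : ∀ z : ℂ, 2 * ((starRingEnd ℂ) z * Iag).re ≤ ‖z‖ ^ 2 * G := by
    intro z
    have h := hmin _ (trig_add_smul z hpn hgT)
    have hpt : ∀ k : Fin (L n),
        ‖f (x n k) - (pn (x n k) + z * g (x n k))‖ ^ 2 * τ n k
        = ‖f (x n k) - pn (x n k)‖ ^ 2 * τ n k
          - 2 * ((starRingEnd ℂ) z *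
              ((f (x n k) - pn (x n k)) * (starRingEnd ℂ) (g (x n k)) * (τ n k : ℂ))).re
          + ‖z‖ ^ 2 * (‖g (x n k)‖ ^ 2 * τ n k) := by
      intro k
      set u : ℂ := f (x n k) - pn (x n k) with hu
      set w : ℂ := g (x n k) with hw
      have e1 : f (x n k) - (pn (x n k) + z * g (x n k)) = u - z * w := by rw [hu, hw]; ring
      rw [e1]
      have hre : ((starRingEnd ℂ) z * (u * (starRingEnd ℂ) w * (τ n k : ℂ))).re
          = (u * (starRingEnd ℂ) (z * w)).re * τ n k := by
        rw [show (starRingEnd ℂ) z * (u * (starRingEnd ℂ) w * (τ n k : ℂ))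
            = (u * ((starRingEnd ℂ) z * (starRingEnd ℂ) w)) * (τ n k : ℂ) by ring, map_mul]
        simp [Complex.mul_re]
      have hnorm : ‖u - z * w‖ ^ 2
          = ‖u‖ ^ 2 - 2 * (u * (starRingEnd ℂ) (z * w)).re + ‖z‖ ^ 2 * ‖w‖ ^ 2 := by
        rw [norm_sq_complex, norm_sq_complex, norm_sq_complex, norm_sq_complex,
          Complex.normSq_sub, Complex.normSq_mul]
        ring
      rw [hre, hnorm]; ring
    have hsum2 : ∑ k, 2 * ((starRingEnd ℂ) z *
          ((f (x n k) - pn (x n k)) * (starRingEnd ℂ) (g (x n k)) * (τ n k : ℂ))).re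
        = 2 * ((starRingEnd ℂ) z * Iag).re := by
      rw [hIag_def, Finset.mul_sum, Complex.re_sum, Finset.mul_sum]
    have hsum3 : ∑ k, ‖z‖ ^ 2 * (‖g (x n k)‖ ^ 2 * τ n k) = ‖z‖ ^ 2 * G := by
      rw [hG_def, Finset.mul_sum]
    have hsum : ∑ k, ‖f (x n k) - (pn (x n k) + z * g (x n k))‖ ^ 2 * τ n k
        = (∑ k, ‖f (x n k) - pn (x n k)‖ ^ 2 * τ n k)
          - 2 * ((starRingEnd ℂ) z * Iag).re + ‖z‖ ^ 2 * G := by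
      rw [Finset.sum_congr rfl (fun k _ => hpt k), Finset.sum_add_distrib,
        Finset.sum_sub_distrib, hsum2, hsum3]
    rw [hsum] at h
    linarith
  -- the inner product vanishes
  have hIag0 : Iag = 0 := by
    set N : ℝ := Complex.normSq Iag with hN
    have hN0 : 0 ≤ N := Complex.normSq_nonneg _
    set r : ℝ := (G + 1)⁻¹ with hr_def
    have hrpos : 0 < G + 1 := by linarith
    have hr1 : r * (G + 1) = 1 := inv_mul_cancel₀ (by linarith)
    have hkey := key ((r : ℂ) * Iag)
    have hrp : 0 < r := inv_pos.2 hrpos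
    have e2 : (starRingEnd ℂ) ((r : ℂ) * Iag) * Iag = ((r * N : ℝ) : ℂ) := by
      rw [map_mul, Complex.conj_ofReal, mul_assoc, ← Complex.normSq_eq_conj_mul_self,
        ← Complex.ofReal_mul, ← hN]
    have e3 : ‖(r : ℂ) * Iag‖ ^ 2 = r ^ 2 * N := by
      rw [norm_mul, mul_pow, norm_sq_complex, norm_sq_complex, Complex.normSq_ofReal, ← hN]
      ring
    rw [e2, e3] at hkey
    have e4 : ((r * N : ℝ) : ℂ).re = r * N := Complex.ofReal_re _
    rw [e4] at hkey
    have hrG : r * G = 1 - r := by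
      have : r * (G + 1) = 1 := hr1
      linarith [this, mul_add r G 1]
    have e5 : r ^ 2 * N * G = r * N * (1 - r) := by rw [← hrG]; ring
    rw [e5] at hkey
    have hNle : N ≤ 0 := by nlinarith [mul_nonneg hrp.le hN0, mul_nonneg (mul_nonneg hrp.le hrp.le) hN0]
    have hNz : N = 0 := le_antisymm hNle hN0
    exact Complex.normSq_eq_zero.mp hNz
  -- real part form of Iag = 0
  have hre0 : ∑ k, ((f (x n k) - pn (x n k)) * (starRingEnd ℂ) (g (x n k))).re * τ n k = 0 := by
    have h1 : Iag.re = ∑ k, ((f (x n k) - pn (x n k)) * (starRingEnd ℂ) (g (x n k))).re * τ n k := by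
      rw [hIag_def, Complex.re_sum]
      exact Finset.sum_congr rfl fun k _ => by simp [Complex.mul_re]
    rw [← h1, hIag0, Complex.zero_re]
  -- G ≤ sum of |b| |g| τ
  have hGT : G ≤ ∑ k, ‖f (x n k) - proj n f (x n k)‖ * ‖g (x n k)‖ * τ n k := by
    have hGeq : G = (∑ k, ((f (x n k) - pn (x n k)) * (starRingEnd ℂ) (g (x n k))).re * τ n k)
        - ∑ k, ((f (x n k) - proj n f (x n k)) * (starRingEnd ℂ) (g (x n k))).re * τ n k := by
      rw [hG_def, ← Finset.sum_sub_distrib]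
      refine Finset.sum_congr rfl fun k _ => ?_
      have e5 : g (x n k) = (f (x n k) - pn (x n k)) - (f (x n k) - proj n f (x n k)) := by
        rw [hg_def]; ring
      have e6 : ‖g (x n k)‖ ^ 2 = (g (x n k) * (starRingEnd ℂ) (g (x n k))).re := by
        rw [Complex.mul_conj, norm_sq_complex, Complex.ofReal_re]
      rw [e6]
      nth_rewrite 1 [e5]
      rw [sub_mul, Complex.sub_re]
      ring
    rw [hGeq, hre0, zero_sub]
    rw [← Finset.sum_neg_distrib]
    refine Finset.sum_le_sum fun k _ => ?_
    have h7 : |((f (x n k) - proj n f (x n k)) * (starRingEnd ℂ) (g (x n k))).re|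
        ≤ ‖f (x n k) - proj n f (x n k)‖ * ‖g (x n k)‖ := by
      calc |((f (x n k) - proj n f (x n k)) * (starRingEnd ℂ) (g (x n k))).re|
          ≤ ‖(f (x n k) - proj n f (x n k)) * (starRingEnd ℂ) (g (x n k))‖ :=
            Complex.abs_re_le_norm _
        _ = ‖f (x n k) - proj n f (x n k)‖ * ‖g (x n k)‖ := by
            rw [norm_mul, RCLike.norm_conj]
    have h8 := (abs_le.mp h7).1
    have := (hτ n k).le
    nlinarith
  -- Cauchy-Schwarz
  have hGS : G ≤ S := by
    have cs := Finset.sum_mul_sq_le_sq_mul_sq Finset.univ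
      (fun k => ‖f (x n k) - proj n f (x n k)‖ * Real.sqrt (τ n k))
      (fun k => ‖g (x n k)‖ * Real.sqrt (τ n k))
    have e9 : ∑ k, (‖f (x n k) - proj n f (x n k)‖ * Real.sqrt (τ n k)) *
        (‖g (x n k)‖ * Real.sqrt (τ n k))
        = ∑ k, ‖f (x n k) - proj n f (x n k)‖ * ‖g (x n k)‖ * τ n k := by
      refine Finset.sum_congr rfl fun k _ => ?_
      rw [mul_mul_mul_comm, Real.mul_self_sqrt (hτ n k).le]
    have e10 : ∑ k, (‖f (x n k) - proj n f (x n k)‖ * Real.sqrt (τ n k)) ^ 2 = S := by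
      refine Finset.sum_congr rfl fun k _ => ?_
      rw [mul_pow, Real.sq_sqrt (hτ n k).le]
    have e11 : ∑ k, (‖g (x n k)‖ * Real.sqrt (τ n k)) ^ 2 = G := by
      refine Finset.sum_congr rfl fun k _ => ?_
      rw [mul_pow, Real.sq_sqrt (hτ n k).le]
    rw [e9, e10, e11] at cs
    rcases eq_or_lt_of_le hG0 with h | h
    · linarith
    · have hGG : G * G ≤ S * G := by nlinarith
      exact le_of_mul_le_mul_right hGG h
  -- conclude
  have hL : A * L2normSq g ≤ S := le_trans hMZg hGS
  have hL2 : L2normSq g ≤ A⁻¹ * S := by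
    rw [inv_mul_eq_div, le_div_iff₀ hA]
    linarith [hL, mul_comm A (L2normSq g)]
  have h1 : 1 ≤ A⁻¹ * B := by
    rw [inv_mul_eq_div, le_div_iff₀ hA]
    linarith
  nlinarith [mul_nonneg (inv_pos.2 hA).le hS0, mul_le_mul_of_nonneg_right h1
    (mul_nonneg (inv_pos.2 hA).le hS0)]

end
end

section
/- Let 𝒳 = {x_{n,k}} with weights τ = {τ_{n,k}} be a Marcinkiewicz–Zygmund family on 𝕋 with constants A, B > 0. Then for each n there exist complex weights w_{n,1},…,w_{n,L_n} such that the quadrature rule I_n(f) = ∑_{k=1}^{L_n} f(x_{n,k}) w_{n,k} satisfies: (i) I_n(p) = ∫₀¹ p(x) dx for all p ∈ 𝒯_n, and (ii) |I_n(f)|² ≤ A^{-1} ∑_{k=1}^{L_n} |f(x_{n,k})|² τ_{n,k} ≤ (B/A) ‖f‖_∞² for every continuous function f on 𝕋. -/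
open MeasureTheory AddCircle

noncomputable section

namespace QW

/-- Abstract Riesz-representation step: a linear functional dominated (in square) by a
finite-dimensional-valued linear map is represented by a vector of controlled norm. -/
lemma riesz_aux {E : Type*} [NormedAddCommGroup E] [InnerProductSpace ℂ E]
    [FiniteDimensional ℂ E] {M : Type*} [AddCommGroup M] [Module ℂ M]
    (T : M →ₗ[ℂ] E) (g : M →ₗ[ℂ] ℂ) (α : ℝ) (hα : 0 ≤ α)
    (key : ∀ c, ‖g c‖ ^ 2 ≤ α * ‖T c‖ ^ 2) :
    ∃ v : E, (∀ c, (inner ℂ v (T c) : ℂ) = g c) ∧ ‖v‖ ^ 2 ≤ α := by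
  set S := LinearMap.range T with hS
  have hle : LinearMap.ker T ≤ LinearMap.ker g := by
    intro c hc
    rw [LinearMap.mem_ker] at hc ⊢
    have h := key c
    rw [hc, norm_zero] at h
    have : ‖g c‖ = 0 := by nlinarith [norm_nonneg (g c), sq_nonneg ‖g c‖]
    exact norm_eq_zero.mp this
  let φ : S →ₗ[ℂ] ℂ :=
    ((LinearMap.ker T).liftQ g hle).comp T.quotKerEquivRange.symm.toLinearMap
  let φ' : S →L[ℂ] ℂ := LinearMap.toContinuousLinearMap φ
  have hφ' : ∀ c : M, φ' ⟨T c, LinearMap.mem_range_self T c⟩ = g c := by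
    intro c
    show φ ⟨T c, LinearMap.mem_range_self T c⟩ = g c
    simp only [φ, LinearMap.comp_apply, LinearEquiv.coe_coe]
    rw [LinearMap.quotKerEquivRange_symm_apply_image, Submodule.mkQ_apply,
      Submodule.liftQ_apply]
  have hφnorm : ‖φ'‖ ≤ Real.sqrt α := by
    apply ContinuousLinearMap.opNorm_le_bound _ (Real.sqrt_nonneg _)
    rintro ⟨u, hu⟩
    obtain ⟨c, rfl⟩ := hu
    have h1 := key c
    have heq : ‖φ' ⟨T c, LinearMap.mem_range_self T c⟩‖ = ‖g c‖ := by rw [hφ' c]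
    have hnormS : ‖(⟨T c, LinearMap.mem_range_self T c⟩ : S)‖ = ‖T c‖ := rfl
    rw [heq, hnormS]
    have h2 : ‖g c‖ ≤ Real.sqrt (α * ‖T c‖ ^ 2) := by
      rw [← Real.sqrt_sq (norm_nonneg (g c))]
      exact Real.sqrt_le_sqrt h1
    calc ‖g c‖ ≤ Real.sqrt (α * ‖T c‖ ^ 2) := h2
      _ = Real.sqrt α * ‖T c‖ := by
          rw [Real.sqrt_mul hα, Real.sqrt_sq (norm_nonneg _)]
  set v₀ : S := (InnerProductSpace.toDual ℂ S).symm φ' with hv₀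
  refine ⟨(v₀ : E), fun c => ?_, ?_⟩
  · have h2 : (inner ℂ ((v₀ : E)) (T c) : ℂ)
        = inner ℂ v₀ (⟨T c, LinearMap.mem_range_self T c⟩ : S) :=
      (Submodule.coe_inner S v₀ ⟨T c, LinearMap.mem_range_self T c⟩).symm
    rw [h2, hv₀, InnerProductSpace.toDual_symm_apply, hφ' c]
  · have h1 : ‖(v₀ : E)‖ = ‖φ'‖ := by
      have h2 : ‖(v₀ : E)‖ = ‖v₀‖ := rfl
      rw [h2, hv₀, LinearIsometryEquiv.norm_map]
    calc ‖(v₀ : E)‖ ^ 2 ≤ Real.sqrt α ^ 2 := by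
          apply pow_le_pow_left₀ (norm_nonneg _) (h1 ▸ hφnorm)
      _ = α := Real.sq_sqrt hα

/-- The trigonometric polynomial with coefficients `c`. -/
def tp (n : ℕ) (c : ℤ → ℂ) : Torus → ℂ :=
  fun t => ∑ l ∈ Finset.Icc (-(n : ℤ)) (n : ℤ), c l * fourier l t

lemma tp_continuous (n : ℕ) (c : ℤ → ℂ) : Continuous (tp n c) := by
  unfold tp
  exact continuous_finset_sum _ fun l _ => continuous_const.mul (map_continuous (fourier l))

lemma cont_integrable {E : Type*} [NormedAddCommGroup E] {f : Torus → E}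
    (hf : Continuous f) : Integrable f haar := by
  apply hf.integrable_of_hasCompactSupport
  exact HasCompactSupport.of_compactSpace f

lemma integral_fourier (l : ℤ) :
    (∫ t : Torus, fourier l t ∂haar) = if l = 0 then 1 else 0 := by
  split_ifs with h
  · simp [h, fourier_zero]
  · exact integral_eq_zero_of_add_right_eq_neg
      (fun t => fourier_add_half_inv_index h one_pos t)

lemma integral_tp (n : ℕ) (c : ℤ → ℂ) : ∫ t, tp n c t ∂haar = c 0 := by
  unfold tp
  rw [integral_finset_sum _ fun l _ =>
    cont_integrable (f := fun t => c l * fourier l t)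
      (continuous_const.mul (map_continuous (fourier l)))]
  simp_rw [MeasureTheory.integral_const_mul, integral_fourier, mul_ite, mul_one, mul_zero]
  rw [Finset.sum_ite_eq' _ (0 : ℤ) c]
  simp

lemma sq_integral_le {g : Torus → ℝ} (hg : Continuous g) :
    (∫ t, g t ∂haar) ^ 2 ≤ ∫ t, (g t) ^ 2 ∂haar := by
  set m := ∫ t, g t ∂haar with hm
  have hgi : Integrable g haar := cont_integrable hg
  have hgi2 : Integrable (fun t => (g t) ^ 2) haar := cont_integrable (hg.pow 2)
  have h0 : 0 ≤ ∫ t, (g t - m) ^ 2 ∂haar := integral_nonneg fun t => sq_nonneg _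
  have hexp : ∫ t, (g t - m) ^ 2 ∂haar
      = (∫ t, (g t) ^ 2 ∂haar) - 2 * m * m + m ^ 2 := by
    have : ∀ t, (g t - m) ^ 2 = (g t) ^ 2 - (2 * m) * g t + m ^ 2 := by intro t; ring
    simp_rw [this]
    rw [integral_add (by exact (hgi2.sub (hgi.const_mul (2*m)))) (integrable_const _),
      integral_sub hgi2 (hgi.const_mul (2*m)), MeasureTheory.integral_const_mul, integral_const]
    simp [← hm]
  nlinarith [h0, hexp]

/-- The evaluation vector of a function at the sample points, weighted by `√τ`. -/
def sampF {m : ℕ} (y : Fin m → Torus) (σ : Fin m → ℝ) (f : Torus → ℂ) :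
    EuclideanSpace ℂ (Fin m) :=
  WithLp.toLp 2 (fun k => f (y k) * (Real.sqrt (σ k) : ℂ))

lemma norm_sampF_sq {m : ℕ} (y : Fin m → Torus) (σ : Fin m → ℝ)
    (hσ : ∀ k, 0 ≤ σ k) (f : Torus → ℂ) :
    ‖sampF y σ f‖ ^ 2 = ∑ k, ‖f (y k)‖ ^ 2 * σ k := by
  rw [EuclideanSpace.norm_eq, Real.sq_sqrt (Finset.sum_nonneg fun k _ => sq_nonneg _)]
  refine Finset.sum_congr rfl fun k _ => ?_
  rw [sampF, PiLp.toLp_apply]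
  rw [norm_mul, Complex.norm_real, Real.norm_eq_abs,
    abs_of_nonneg (Real.sqrt_nonneg _), mul_pow, Real.sq_sqrt (hσ k)]

lemma inner_sampF {m : ℕ} (y : Fin m → Torus) (σ : Fin m → ℝ)
    (v : EuclideanSpace ℂ (Fin m)) (f : Torus → ℂ) :
    (inner ℂ v (sampF y σ f) : ℂ)
      = ∑ k, f (y k) * ((starRingEnd ℂ) (v k) * (Real.sqrt (σ k) : ℂ)) := by
  rw [PiLp.inner_apply]
  refine Finset.sum_congr rfl fun k _ => ?_
  simp [sampF, RCLike.inner_apply]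
  ring

/-- The linear sampling map on coefficient vectors. -/
def samp (n : ℕ) {m : ℕ} (y : Fin m → Torus) (σ : Fin m → ℝ) :
    (ℤ → ℂ) →ₗ[ℂ] EuclideanSpace ℂ (Fin m) where
  toFun c := sampF y σ (tp n c)
  map_add' c c' := by
    ext k
    simp [sampF, tp, Finset.sum_add_distrib, add_mul]
  map_smul' a c := by
    ext k
    simp only [sampF, tp, PiLp.toLp_apply, PiLp.smul_apply, Pi.smul_apply, smul_eq_mul, RingHom.id_apply,
      mul_assoc]
    rw [← mul_assoc, Finset.mul_sum]

end QW

/-- every MZ family carries quadrature weights `w_{n,k}` such that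
`I_n(f) = ∑_k f(x_{n,k}) w_{n,k}` is exact on `𝒯_n` and satisfies
`|I_n(f)|² ≤ A⁻¹ ∑_k |f(x_{n,k})|² τ_{n,k} ≤ (B/A) ‖f‖_∞²` for continuous `f`. -/
theorem quadrature_weights_exist
    (L : ℕ → ℕ) (x : ∀ n, Fin (L n) → Torus) (τ : ∀ n, Fin (L n) → ℝ)
    (A B : ℝ) (hA : 0 < A) (hB : 0 < B) (hτ : ∀ n k, 0 < τ n k)
    (hMZ : ∀ n (p : Torus → ℂ), IsTrigPoly n p →
      A * L2normSq p ≤ ∑ k, ‖p (x n k)‖ ^ 2 * τ n k ∧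
      ∑ k, ‖p (x n k)‖ ^ 2 * τ n k ≤ B * L2normSq p) :
    ∀ n : ℕ, ∃ w : Fin (L n) → ℂ,
      (∀ p : Torus → ℂ, IsTrigPoly n p →
        ∑ k, p (x n k) * w k = ∫ t, p t ∂haar) ∧
      (∀ f : Torus → ℂ, Continuous f →
        ‖∑ k, f (x n k) * w k‖ ^ 2 ≤ A⁻¹ * ∑ k, ‖f (x n k)‖ ^ 2 * τ n k ∧
        A⁻¹ * ∑ k, ‖f (x n k)‖ ^ 2 * τ n k ≤ (B / A) * (⨆ t : Torus, ‖f t‖) ^ 2) := by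
  intro n
  classical
  set T := QW.samp n (x n) (τ n) with hT
  -- the key inequality
  have key : ∀ c : ℤ → ℂ,
      ‖(LinearMap.proj (0 : ℤ) : (ℤ → ℂ) →ₗ[ℂ] ℂ) c‖ ^ 2 ≤ A⁻¹ * ‖T c‖ ^ 2 := by
    intro c
    have hTp : IsTrigPoly n (QW.tp n c) := ⟨c, rfl⟩
    have hMZ1 := (hMZ n _ hTp).1
    have hnorm : ‖T c‖ ^ 2 = ∑ k, ‖QW.tp n c (x n k)‖ ^ 2 * τ n k :=
      QW.norm_sampF_sq _ _ (fun k => (hτ n k).le) _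
    have h1 : ‖c 0‖ ≤ ∫ t, ‖QW.tp n c t‖ ∂haar := by
      rw [← QW.integral_tp n c]; exact norm_integral_le_integral_norm _
    have h2 : ‖c 0‖ ^ 2 ≤ L2normSq (QW.tp n c) := by
      calc ‖c 0‖ ^ 2 ≤ (∫ t, ‖QW.tp n c t‖ ∂haar) ^ 2 :=
            pow_le_pow_left₀ (norm_nonneg _) h1 2
        _ ≤ ∫ t, ‖QW.tp n c t‖ ^ 2 ∂haar := QW.sq_integral_le (QW.tp_continuous n c).norm
        _ = L2normSq (QW.tp n c) := rfl
    have h3 : L2normSq (QW.tp n c) ≤ A⁻¹ * ‖T c‖ ^ 2 := by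
      rw [hnorm]
      have := mul_le_mul_of_nonneg_left hMZ1 (inv_nonneg.2 hA.le)
      rwa [← mul_assoc, inv_mul_cancel₀ hA.ne', one_mul] at this
    have : ‖(LinearMap.proj (0 : ℤ) : (ℤ → ℂ) →ₗ[ℂ] ℂ) c‖ = ‖c 0‖ := rfl
    rw [this]
    linarith
  obtain ⟨v, hv1, hv2⟩ :=
    QW.riesz_aux T (LinearMap.proj (0 : ℤ)) A⁻¹ (inv_nonneg.2 hA.le) key
  refine ⟨fun k => (starRingEnd ℂ) (v k) * (Real.sqrt (τ n k) : ℂ), ?_, ?_⟩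
  · -- exactness on trig polynomials
    rintro p ⟨c, rfl⟩
    have hps : QW.sampF (x n) (τ n) (QW.tp n c) = T c := rfl
    beta_reduce
    have e1 : (∑ k, (∑ l ∈ Finset.Icc (-(n : ℤ)) (n : ℤ), c l * fourier l (x n k)) *
          ((starRingEnd ℂ) (v k) * (Real.sqrt (τ n k) : ℂ)))
        = (inner ℂ v (QW.sampF (x n) (τ n) (QW.tp n c)) : ℂ) :=
      (QW.inner_sampF (x n) (τ n) v (QW.tp n c)).symm
    rw [e1, hps, hv1 c]
    have : (LinearMap.proj (0 : ℤ) : (ℤ → ℂ) →ₗ[ℂ] ℂ) c = c 0 := rfl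
    rw [this]
    exact (QW.integral_tp n c).symm
  · -- the two bounds
    intro f hf
    have hτsum_nonneg : (0:ℝ) ≤ ∑ k, ‖f (x n k)‖ ^ 2 * τ n k :=
      Finset.sum_nonneg fun k _ => mul_nonneg (sq_nonneg _) (hτ n k).le
    constructor
    · rw [← QW.inner_sampF (x n) (τ n) v f]
      have hCS := norm_inner_le_norm (𝕜 := ℂ) v (QW.sampF (x n) (τ n) f)
      calc ‖(inner ℂ v (QW.sampF (x n) (τ n) f) : ℂ)‖ ^ 2
          ≤ (‖v‖ * ‖QW.sampF (x n) (τ n) f‖) ^ 2 :=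
            pow_le_pow_left₀ (norm_nonneg _) hCS 2
        _ = ‖v‖ ^ 2 * ‖QW.sampF (x n) (τ n) f‖ ^ 2 := by ring
        _ = ‖v‖ ^ 2 * ∑ k, ‖f (x n k)‖ ^ 2 * τ n k := by
            rw [QW.norm_sampF_sq _ _ (fun k => (hτ n k).le)]
        _ ≤ A⁻¹ * ∑ k, ‖f (x n k)‖ ^ 2 * τ n k :=
            mul_le_mul_of_nonneg_right hv2 hτsum_nonneg
    · set M := ⨆ t : Torus, ‖f t‖ with hM
      have hbdd : BddAbove (Set.range fun t : Torus => ‖f t‖) :=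
        (isCompact_range hf.norm).bddAbove
      have hMle : ∀ t, ‖f t‖ ≤ M := fun t => le_ciSup hbdd t
      have hM0 : 0 ≤ M := le_trans (norm_nonneg (f 0)) (hMle 0)
      have hsumτ : ∑ k, τ n k ≤ B := by
        have h1 : IsTrigPoly n (fun _ => (1 : ℂ)) := by
          refine ⟨fun l => if l = 0 then 1 else 0, ?_⟩
          funext t
          simp only [ite_mul, one_mul, zero_mul]
          rw [Finset.sum_ite_eq' _ (0 : ℤ)]
          simp [Finset.mem_Icc, fourier_zero]
        have h2 := (hMZ n _ h1).2
        have hL2 : L2normSq (fun _ => (1 : ℂ)) = 1 := by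
          simp [L2normSq]
        simpa [hL2] using h2
      have hchain : ∑ k, ‖f (x n k)‖ ^ 2 * τ n k ≤ B * M ^ 2 := by
        calc ∑ k, ‖f (x n k)‖ ^ 2 * τ n k ≤ ∑ k, M ^ 2 * τ n k :=
              Finset.sum_le_sum fun k _ =>
                mul_le_mul_of_nonneg_right
                  (pow_le_pow_left₀ (norm_nonneg _) (hMle _) 2) (hτ n k).le
          _ = M ^ 2 * ∑ k, τ n k := by rw [Finset.mul_sum]
          _ ≤ M ^ 2 * B := mul_le_mul_of_nonneg_left hsumτ (sq_nonneg M)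
          _ = B * M ^ 2 := by ring
      calc A⁻¹ * ∑ k, ‖f (x n k)‖ ^ 2 * τ n k ≤ A⁻¹ * (B * M ^ 2) :=
            mul_le_mul_of_nonneg_left hchain (inv_nonneg.2 hA.le)
        _ = (B / A) * M ^ 2 := by field_simp

end
end

section
/- Let A, B > 0, κ = B/A, and for each n let I_n(f) = ∑_{k=1}^{L_n} f(x_{n,k}) w_{n,k} be a quadrature rule with nodes x_{n,k} ∈ 𝕋 and complex weights w_{n,k} such that I_n(p) = ∫₀¹ p(x) dx for all p ∈ 𝒯_n and |I_n(g)| ≤ √κ ‖g‖_∞ for every continuous g on 𝕋. If f is a continuous function on 𝕋 whose Fourier coefficients satisfy |f̂(k)| ≤ c e^{-ρ|k|} for all k ∈ ℤ, for some c > 0 and ρ > 0, then there is a constant C > 0 such that |∫₀¹ f(x) dx − I_n(f)| ≤ C e^{-ρn} for all n ≥ 1. -/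
open MeasureTheory AddCircle

noncomputable section

/-- Norm of `fourier l` at a point is 1. -/
lemma norm_fourier_apply (l : ℤ) (t : Torus) : ‖(fourier l t : ℂ)‖ = 1 := by
  rw [fourier_apply]
  exact Circle.norm_coe _

/-- quadrature rules, exact on `𝒯_n` and bounded by `√κ ‖·‖_∞`,
converge geometrically for a continuous `f` with exponentially decaying Fourier
coefficients: `|∫ f − I_n(f)| ≤ C e^{-ρn}` for all `n ≥ 1`, for some `C > 0`. -/
theorem quadrature_error_analytic
    (A B : ℝ) (hA : 0 < A) (hB : 0 < B)
    (L : ℕ → ℕ) (x : ∀ n, Fin (L n) → Torus) (w : ∀ n, Fin (L n) → ℂ)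
    (hexact : ∀ n (p : Torus → ℂ), IsTrigPoly n p →
      ∑ k, p (x n k) * w n k = ∫ t, p t ∂haar)
    (hbound : ∀ n (g : Torus → ℂ), Continuous g →
      ‖∑ k, g (x n k) * w n k‖ ≤ Real.sqrt (B / A) * ⨆ t : Torus, ‖g t‖)
    (f : Torus → ℂ) (hf : Continuous f)
    (c ρ : ℝ) (hc : 0 < c) (hρ : 0 < ρ)
    (hdecay : ∀ k : ℤ, ‖fourierCoeff f k‖ ≤ c * Real.exp (-ρ * |(k : ℝ)|)) :
    ∃ C : ℝ, 0 < C ∧ ∀ n : ℕ, 1 ≤ n →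
      ‖(∫ t, f t ∂haar) - ∑ k, f (x n k) * w n k‖ ≤ C * Real.exp (-ρ * n) := by
  set κ := Real.sqrt (B / A) with hκdef
  have hκ0 : 0 ≤ κ := Real.sqrt_nonneg _
  -- the majorant of the Fourier coefficients
  set a : ℤ → ℝ := fun l => c * Real.exp (-ρ * |(l : ℝ)|) with ha
  have ha0 : ∀ l, 0 ≤ a l := fun l => by positivity
  have hnat : Summable fun m : ℕ => a m := by
    have h1 : Summable fun m : ℕ => Real.exp ((m : ℝ) * (-ρ)) :=
      Real.summable_exp_nat_mul_iff.2 (by linarith)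
    refine (h1.mul_left c).congr fun m => ?_
    simp only [ha, Int.cast_natCast, abs_of_nonneg (Nat.cast_nonneg m : (0:ℝ) ≤ m)]
    ring_nf
  have hneg : Summable fun m : ℕ => a (-m) := by
    have h1 : Summable fun m : ℕ => Real.exp ((m : ℝ) * (-ρ)) :=
      Real.summable_exp_nat_mul_iff.2 (by linarith)
    refine (h1.mul_left c).congr fun m => ?_
    simp only [ha, Int.cast_neg, Int.cast_natCast, abs_neg,
      abs_of_nonneg (Nat.cast_nonneg m : (0:ℝ) ≤ m)]
    ring_nf
  have hsum : Summable a := Summable.of_nat_of_neg hnat hneg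
  have hsumC : Summable (fourierCoeff f) := Summable.of_norm_bounded hsum hdecay
  set T := ∑' l : ℤ, a l with hT
  have hTpos : 0 < T := by
    have h0 : a 0 ≤ T := Summable.le_tsum hsum 0 fun j _ => ha0 j
    have : a 0 = c := by simp [ha]
    linarith
  -- pointwise convergence of the Fourier series
  have hpt : ∀ t : Torus, HasSum (fun l : ℤ => fourierCoeff f l • fourier l t) (f t) := by
    intro t
    exact has_pointwise_sum_fourier_series_of_summable
      (f := ContinuousMap.mk f hf) hsumC t
  refine ⟨(1 + κ) * T, by positivity, ?_⟩
  intro n _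
  -- partial Fourier sum
  set s : Finset ℤ := Finset.Icc (-(n : ℤ)) (n : ℤ) with hs
  set S : Torus → ℂ := fun t => ∑ l ∈ s, fourierCoeff f l * fourier l t with hSdef
  have htp : IsTrigPoly n S := ⟨fourierCoeff f, rfl⟩
  have hScont : Continuous S := by
    apply continuous_finset_sum
    exact fun l _ => continuous_const.mul (fourier l).continuous
  set g : Torus → ℂ := fun t => f t - S t with hgdef
  have hgcont : Continuous g := hf.sub hScont
  -- facts about the complement of s
  have hmem : ∀ l : ℤ, l ∉ s → l < -(n : ℤ) ∨ (n : ℤ) < l := by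
    intro l hl
    rw [hs, Finset.mem_Icc] at hl
    omega
  -- the shifting injection
  set e : {l : ℤ // l ∉ s} → ℤ :=
    fun l => if 0 ≤ (l : ℤ) then (l : ℤ) - n else (l : ℤ) + n with he
  have hinj : Function.Injective e := by
    rintro p q heq
    have h1' := hmem p.1 p.2
    have h2' := hmem q.1 q.2
    apply Subtype.ext
    simp only [he] at heq
    split_ifs at heq <;> omega
  have habs : ∀ l : {l : ℤ // l ∉ s}, |(l : ℤ)| = (n : ℤ) + |e l| := by
    intro p
    have h1' := hmem p.1 p.2
    simp only [he]
    split_ifs with h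
    · rw [abs_of_nonneg h, abs_of_nonneg (by omega)]; ring
    · rw [abs_of_neg (by omega : (p : ℤ) < 0), abs_of_neg (by omega : (p : ℤ) + (n:ℤ) < 0)]
      ring
  have hle : ∀ l : {l : ℤ // l ∉ s}, a l ≤ Real.exp (-ρ * n) * a (e l) := by
    intro l
    have h1 : |((l : ℤ) : ℝ)| = (n : ℝ) + |((e l : ℤ) : ℝ)| := by
      rw [← Int.cast_abs, ← Int.cast_abs, habs l]
      push_cast
      ring
    have : a l = Real.exp (-ρ * n) * a (e l) := by
      simp only [ha, h1]
      rw [mul_add, Real.exp_add]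
      ring
    exact le_of_eq this
  -- tail estimate
  have htail : (∑' l : {l : ℤ // l ∉ s}, a l) ≤ Real.exp (-ρ * n) * T := by
    have h := Summable.tsum_le_tsum_of_inj e hinj
      (fun m _ => by positivity)
      hle (hsum.subtype _) (hsum.mul_left (Real.exp (-ρ * n)))
    calc (∑' l : {l : ℤ // l ∉ s}, a l)
        ≤ ∑' m : ℤ, Real.exp (-ρ * n) * a m := h
      _ = Real.exp (-ρ * n) * T := tsum_mul_left
  set M := Real.exp (-ρ * n) * T with hM
  -- uniform bound on g
  have hgM : ∀ t : Torus, ‖g t‖ ≤ M := by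
    intro t
    have hsumt : Summable fun l : ℤ => fourierCoeff f l • fourier l t :=
      Summable.of_norm_bounded hsum fun l => by
        rw [norm_smul, norm_fourier_apply, mul_one]; exact hdecay l
    have key := Summable.sum_add_tsum_subtype_compl hsumt s
    have hft : (∑' l : ℤ, fourierCoeff f l • fourier l t) = f t := (hpt t).tsum_eq
    have hSt : S t = ∑ l ∈ s, fourierCoeff f l • fourier l t := by
      simp [hSdef, smul_eq_mul]
    have hgt : g t = ∑' l : {l : ℤ // l ∉ s}, fourierCoeff f l • fourier l t := by
      rw [hgdef]
      simp only [hSt]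
      rw [← hft, ← key]
      ring
    have hnorms : Summable fun l : {l : ℤ // l ∉ s} =>
        ‖fourierCoeff f (l : ℤ) • fourier (l : ℤ) t‖ := by
      refine Summable.of_nonneg_of_le (fun l => norm_nonneg _) (fun l => ?_) (hsum.subtype _)
      rw [norm_smul, norm_fourier_apply, mul_one]; exact hdecay l
    calc ‖g t‖ = ‖∑' l : {l : ℤ // l ∉ s}, fourierCoeff f (l : ℤ) • fourier (l : ℤ) t‖ := by
          rw [hgt]
      _ ≤ ∑' l : {l : ℤ // l ∉ s}, ‖fourierCoeff f (l : ℤ) • fourier (l : ℤ) t‖ :=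
          norm_tsum_le_tsum_norm hnorms
      _ ≤ ∑' l : {l : ℤ // l ∉ s}, a l := by
          refine Summable.tsum_le_tsum (fun l => ?_) hnorms (hsum.subtype _)
          rw [norm_smul, norm_fourier_apply, mul_one]; exact hdecay l
      _ ≤ M := htail
  -- integrability
  have hcsf : HasCompactSupport f := IsClosed.isCompact (isClosed_tsupport f)
  have hcsS : HasCompactSupport S := IsClosed.isCompact (isClosed_tsupport S)
  have hintf : Integrable f haar := hf.integrable_of_hasCompactSupport hcsf
  have hintS : Integrable S haar := hScont.integrable_of_hasCompactSupport hcsS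
  -- rewrite the error
  have hexS := hexact n S htp
  have hIg : ∑ k, g (x n k) * w n k
      = ∑ k, f (x n k) * w n k - ∑ k, S (x n k) * w n k := by
    rw [← Finset.sum_sub_distrib]
    simp [hgdef, sub_mul]
  have hig : ∫ t, g t ∂haar = (∫ t, f t ∂haar) - ∫ t, S t ∂haar :=
    integral_sub hintf hintS
  have herr : (∫ t, f t ∂haar) - ∑ k, f (x n k) * w n k
      = (∫ t, g t ∂haar) - ∑ k, g (x n k) * w n k := by
    rw [hig, hIg, hexS]; ring
  rw [herr]
  have hM0 : 0 ≤ M := by positivity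
  have h1 : ‖∫ t, g t ∂haar‖ ≤ M := by
    have h := norm_integral_le_of_norm_le_const (μ := haar)
      (Filter.Eventually.of_forall hgM)
    simpa using h
  have h2 : ‖∑ k, g (x n k) * w n k‖ ≤ κ * M := by
    refine le_trans (hbound n g hgcont) ?_
    exact mul_le_mul_of_nonneg_left (ciSup_le hgM) hκ0
  calc ‖(∫ t, g t ∂haar) - ∑ k, g (x n k) * w n k‖
      ≤ ‖∫ t, g t ∂haar‖ + ‖∑ k, g (x n k) * w n k‖ := norm_sub_le _ _
    _ ≤ M + κ * M := add_le_add h1 h2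
    _ = (1 + κ) * T * Real.exp (-ρ * n) := by rw [hM]; ring

end
end
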